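/- Let $\xi$ be a transcendental real number, $n$ a positive integer, and $(P_i)_{i \geq 0}$ a sequence of minimal polynomials associated to $n$ and $\xi$. If for integers $0 \leq i < j$ the real span of $P_i, P_{i+1}, \dots, P_j$ has dimension $2$, then $S_{j-1} = \pm S_i$, where $S_k = P_k(\xi) P_{k+1} - P_{k+1}(\xi) P_k$. -/

import Mathlib

open Polynomial

/-- Naive height of an integer polynomial, as a real number. -/
noncomputable def heightZ (P : Polynomial ℤ) : ℝ := ⨆ i : ℕ, |(P.coeff i : ℝ)|

/-- The real polynomial obtained from an integer polynomial. -/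
noncomputable def toR (P : Polynomial ℤ) : Polynomial ℝ := P.map (Int.castRingHom ℝ)

/-- A sequence of minimal polynomials associated to `n` and `ξ`. -/
def IsMinimalSeq (n : ℕ) (ξ : ℝ) (P : ℕ → Polynomial ℤ) : Prop :=
  (∀ i, P i ≠ 0) ∧ (∀ i, (P i).natDegree ≤ n) ∧
  (∀ i, heightZ (P i) < heightZ (P (i + 1))) ∧
  (∀ i, |Polynomial.aeval ξ (P (i + 1))| < |Polynomial.aeval ξ (P i)|) ∧
  (∀ i, ∀ Q : Polynomial ℤ, Q ≠ 0 → Q.natDegree ≤ n →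
    |Polynomial.aeval ξ Q| < |Polynomial.aeval ξ (P i)| → heightZ (P (i + 1)) ≤ heightZ Q)

lemma toR_coeff (P : Polynomial ℤ) (i : ℕ) : (toR P).coeff i = (P.coeff i : ℝ) := by
  simp [toR]

lemma aeval_eq_eval_toR (ξ : ℝ) (P : Polynomial ℤ) : aeval ξ P = (toR P).eval ξ := by
  rw [toR, aeval_def, eval₂_eq_eval_map]; rfl

lemma toR_ne_zero {P : Polynomial ℤ} (h : P ≠ 0) : toR P ≠ 0 := by
  rw [toR, Ne, Polynomial.map_eq_zero_iff Int.cast_injective]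
  exact h

lemma aeval_ne_zero_of_trans {ξ : ℝ} (hξ : Transcendental ℚ ξ) {P : Polynomial ℤ}
    (h : P ≠ 0) : aeval ξ P ≠ 0 := by
  intro h0
  apply hξ
  refine ⟨P.map (Int.castRingHom ℚ), ?_, ?_⟩
  · rw [Ne, Polynomial.map_eq_zero_iff Int.cast_injective]
    exact h
  · have h1 : (Int.castRingHom ℚ) = algebraMap ℤ ℚ := rfl
    rw [h1, aeval_map_algebraMap]
    exact h0

-- linearity of toR
lemma toR_sub (P Q : Polynomial ℤ) : toR (P - Q) = toR P - toR Q := by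
  simp [toR]

lemma toR_zsmul (a : ℤ) (P : Polynomial ℤ) : toR (a • P) = (a : ℝ) • toR P := by
  ext i
  simp [toR_coeff, coeff_smul]

-- height lemmas
lemma heightZ_bdd (P : Polynomial ℤ) : BddAbove (Set.range fun i : ℕ => |(P.coeff i : ℝ)|) := by
  refine ⟨∑ k ∈ P.support, |(P.coeff k : ℝ)|, ?_⟩
  rintro x ⟨i, rfl⟩
  by_cases hi : i ∈ P.support
  · exact Finset.single_le_sum (f := fun k => |(P.coeff k : ℝ)|) (fun k _ => abs_nonneg _) hi
  · simp only [Polynomial.notMem_support_iff] at hi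
    simp only [hi, Int.cast_zero, abs_zero]
    exact Finset.sum_nonneg fun k _ => abs_nonneg _

lemma coeff_abs_le_heightZ (P : Polynomial ℤ) (i : ℕ) : |(P.coeff i : ℝ)| ≤ heightZ P :=
  le_ciSup (heightZ_bdd P) i

lemma heightZ_nonneg (P : Polynomial ℤ) : 0 ≤ heightZ P :=
  le_trans (abs_nonneg _) (coeff_abs_le_heightZ P 0)

lemma heightZ_pos {P : Polynomial ℤ} (h : P ≠ 0) : 0 < heightZ P := by
  obtain ⟨i, hi⟩ : ∃ i, P.coeff i ≠ 0 := by
    by_contra hc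
    push_neg at hc
    exact h (Polynomial.ext fun i => by simp [hc i])
  calc (0:ℝ) < |(P.coeff i : ℝ)| := by positivity
  _ ≤ heightZ P := coeff_abs_le_heightZ P i

lemma heightZ_le_comb {Q P₁ P₂ : Polynomial ℤ} {r s : ℝ}
    (h : toR Q = r • toR P₁ + s • toR P₂) :
    heightZ Q ≤ |r| * heightZ P₁ + |s| * heightZ P₂ := by
  apply ciSup_le
  intro i
  have hc : (Q.coeff i : ℝ) = r * (P₁.coeff i : ℝ) + s * (P₂.coeff i : ℝ) := by
    have := congrArg (fun p => Polynomial.coeff p i) h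
    simpa [toR_coeff, coeff_smul] using this
  calc |(Q.coeff i : ℝ)| ≤ |r| * |(P₁.coeff i : ℝ)| + |s| * |(P₂.coeff i : ℝ)| := by
        rw [hc]; exact (abs_add_le _ _).trans (by rw [abs_mul, abs_mul])
  _ ≤ |r| * heightZ P₁ + |s| * heightZ P₂ := by
    gcongr
    exacts [coeff_abs_le_heightZ _ _, coeff_abs_le_heightZ _ _]

lemma heightZ_le_smul {Q P₁ : Polynomial ℤ} {r : ℝ}
    (h : toR Q = r • toR P₁) : heightZ Q ≤ |r| * heightZ P₁ := by
  have := heightZ_le_comb (Q := Q) (P₁ := P₁) (P₂ := 0) (r := r) (s := 0) (by simpa [toR] using h)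
  simpa using this

lemma indep_pair {n : ℕ} {ξ : ℝ} (hξ : Transcendental ℚ ξ) {P : ℕ → Polynomial ℤ}
    (hP : IsMinimalSeq n ξ P) (k : ℕ) :
    LinearIndependent ℝ ![toR (P k), toR (P (k + 1))] := by
  rw [LinearIndependent.pair_iff]
  intro s t h
  by_cases ht : t = 0
  · subst ht
    simp only [zero_smul, add_zero] at h
    have hx : toR (P k) ≠ 0 := toR_ne_zero (hP.1 k)
    rcases smul_eq_zero.mp h with hs | hx'
    · exact ⟨hs, rfl⟩
    · exact absurd hx' hx
  · exfalso
    have hy : toR (P (k + 1)) = (-s / t) • toR (P k) := by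
      have h1 : t • toR (P (k + 1)) = (-s) • toR (P k) := by
        rw [neg_smul]; exact eq_neg_of_add_eq_zero_left (by rw [add_comm]; exact h)
      calc toR (P (k + 1)) = (t⁻¹ * t) • toR (P (k + 1)) := by
            rw [inv_mul_cancel₀ ht, one_smul]
      _ = t⁻¹ • (t • toR (P (k + 1))) := by rw [mul_smul]
      _ = t⁻¹ • ((-s) • toR (P k)) := by rw [h1]
      _ = (-s / t) • toR (P k) := by rw [← mul_smul]; ring_nf
    have heval : aeval ξ (P (k + 1)) = (-s / t) * aeval ξ (P k) := by
      rw [aeval_eq_eval_toR, aeval_eq_eval_toR, hy]; simp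
    have hpk : (0:ℝ) < |aeval ξ (P k)| := abs_pos.mpr (aeval_ne_zero_of_trans hξ (hP.1 k))
    have habs : |(-s / t)| < 1 := by
      have h2 := hP.2.2.2.1 k
      rw [heval, abs_mul] at h2
      nlinarith
    have h3 : heightZ (P (k + 1)) ≤ |(-s / t)| * heightZ (P k) := heightZ_le_smul hy
    have h4 := hP.2.2.1 k
    have h5 : (0:ℝ) < heightZ (P k) := heightZ_pos (hP.1 k)
    nlinarith

lemma exists_int_coeffs {n : ℕ} {ξ : ℝ} (hξ : Transcendental ℚ ξ) {P : ℕ → Polynomial ℤ}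
    (hP : IsMinimalSeq n ξ P) (k : ℕ) {Q : Polynomial ℤ} (hQn : Q.natDegree ≤ n) {r s : ℝ}
    (h : toR Q = r • toR (P k) + s • toR (P (k + 1))) :
    ∃ a b : ℤ, r = a ∧ s = b := by
  set a : ℤ := round r with ha
  set b : ℤ := round s with hb
  refine ⟨a, b, ?_⟩
  set Q' : Polynomial ℤ := Q - a • P k - b • P (k + 1) with hQ'
  have htoR : toR Q' = (r - a) • toR (P k) + (s - b) • toR (P (k + 1)) := by
    rw [hQ', toR_sub, toR_sub, toR_zsmul, toR_zsmul, h, sub_smul, sub_smul]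
    abel
  by_cases hz : Q' = 0
  · have h0 : (r - a) • toR (P k) + (s - b) • toR (P (k + 1)) = 0 := by
      rw [← htoR, hz]; simp [toR]
    obtain ⟨h1, h2⟩ := LinearIndependent.pair_iff.mp (indep_pair hξ hP k) _ _ h0
    constructor
    · linarith [sub_eq_zero.mp h1]
    · linarith [sub_eq_zero.mp h2]
  · exfalso
    have hdeg : Q'.natDegree ≤ n := by
      refine le_trans (natDegree_sub_le _ _) (max_le (le_trans (natDegree_sub_le _ _)
        (max_le hQn ?_)) ?_)
      · exact (natDegree_smul_le _ _).trans (hP.2.1 k)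
      · exact (natDegree_smul_le _ _).trans (hP.2.1 (k + 1))
    have hra : |r - (a:ℝ)| ≤ 1/2 := abs_sub_round r
    have hsb : |s - (b:ℝ)| ≤ 1/2 := abs_sub_round s
    have hevQ : aeval ξ Q' = (r - a) * aeval ξ (P k) + (s - b) * aeval ξ (P (k + 1)) := by
      rw [aeval_eq_eval_toR, htoR, aeval_eq_eval_toR, aeval_eq_eval_toR]; simp
    have hpk : (0:ℝ) < |aeval ξ (P k)| := abs_pos.mpr (aeval_ne_zero_of_trans hξ (hP.1 k))
    have hlt := hP.2.2.2.1 k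
    have habs : |aeval ξ Q'| < |aeval ξ (P k)| := by
      calc |aeval ξ Q'| ≤ |r - a| * |aeval ξ (P k)| + |s - b| * |aeval ξ (P (k + 1))| := by
            rw [hevQ]; exact (abs_add_le _ _).trans (by rw [abs_mul, abs_mul])
      _ < |aeval ξ (P k)| := by nlinarith [abs_nonneg (aeval ξ (P (k+1)))]
    have hmin := hP.2.2.2.2 k Q' hz hdeg habs
    have hhQ : heightZ Q' ≤ |r - a| * heightZ (P k) + |s - b| * heightZ (P (k + 1)) :=
      heightZ_le_comb htoR
    have h4 := hP.2.2.1 k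
    have h5 : (0:ℝ) < heightZ (P k) := heightZ_pos (hP.1 k)
    have h6 : (0:ℝ) < heightZ (P (k+1)) := heightZ_pos (hP.1 (k+1))
    nlinarith

/-- If the span of `P_i, …, P_j` has dimension `2`, then `S_{j-1} = ± S_i`, where
`S_k = P_k(ξ) P_{k+1} - P_{k+1}(ξ) P_k`. -/
theorem S_eq_pm (n : ℕ) (hn : 1 ≤ n) (ξ : ℝ) (hξ : Transcendental ℚ ξ)
    (P : ℕ → Polynomial ℤ) (hP : IsMinimalSeq n ξ P) (i j : ℕ) (hij : i < j)
    (hdim : Module.finrank ℝ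
      (Submodule.span ℝ {R : Polynomial ℝ | ∃ k ∈ Set.Icc i j, R = toR (P k)}) = 2) :
    (fun k : ℕ => (Polynomial.aeval ξ (P k)) • toR (P (k + 1)) -
        (Polynomial.aeval ξ (P (k + 1))) • toR (P k)) (j - 1) =
      (fun k : ℕ => (Polynomial.aeval ξ (P k)) • toR (P (k + 1)) -
        (Polynomial.aeval ξ (P (k + 1))) • toR (P k)) i ∨
    (fun k : ℕ => (Polynomial.aeval ξ (P k)) • toR (P (k + 1)) -
        (Polynomial.aeval ξ (P (k + 1))) • toR (P k)) (j - 1) =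
      -(fun k : ℕ => (Polynomial.aeval ξ (P k)) • toR (P (k + 1)) -
        (Polynomial.aeval ξ (P (k + 1))) • toR (P k)) i := by
  classical
  set S : ℕ → Polynomial ℝ := fun k : ℕ =>
    (Polynomial.aeval ξ (P k)) • toR (P (k + 1)) -
      (Polynomial.aeval ξ (P (k + 1))) • toR (P k) with hSdef
  set V : Submodule ℝ (Polynomial ℝ) :=
    Submodule.span ℝ {R : Polynomial ℝ | ∃ k ∈ Set.Icc i j, R = toR (P k)} with hVdef
  have hfin : FiniteDimensional ℝ V := FiniteDimensional.of_finrank_eq_succ hdim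
  have hmemV : ∀ k, i ≤ k → k ≤ j → toR (P k) ∈ V := fun k h1 h2 =>
    Submodule.subset_span ⟨k, ⟨h1, h2⟩, rfl⟩
  have hspanW : ∀ k, i ≤ k → k + 1 ≤ j →
      Submodule.span ℝ {toR (P k), toR (P (k + 1))} = V := by
    intro k h1 h2
    have hle : Submodule.span ℝ {toR (P k), toR (P (k + 1))} ≤ V := by
      rw [Submodule.span_le]
      intro w hw
      rcases hw with rfl | hw
      · exact hmemV k h1 (by omega)
      · rw [Set.mem_singleton_iff] at hw
        subst hw
        exact hmemV (k + 1) (by omega) h2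
    refine Submodule.eq_of_le_of_finrank_eq hle ?_
    rw [hdim]
    have := finrank_span_eq_card (indep_pair hξ hP k)
    rwa [show Set.range ![toR (P k), toR (P (k + 1))] = {toR (P k), toR (P (k + 1))} by
      ext w; simp [Matrix.range_cons, Matrix.range_empty, or_comm]] at this
  have hcomb : ∀ k, i ≤ k → k + 1 ≤ j → ∀ m, i ≤ m → m ≤ j →
      ∃ a b : ℤ, toR (P m) = (a : ℝ) • toR (P k) + (b : ℝ) • toR (P (k + 1)) := by
    intro k h1 h2 m h3 h4
    have hm : toR (P m) ∈ Submodule.span ℝ {toR (P k), toR (P (k + 1))} := by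
      rw [hspanW k h1 h2]; exact hmemV m h3 h4
    obtain ⟨r, s, hrs⟩ := Submodule.mem_span_pair.mp hm
    obtain ⟨a, b, hra, hsb⟩ := exists_int_coeffs hξ hP k (hP.2.1 m) hrs.symm
    exact ⟨a, b, by rw [← hrs, hra, hsb]⟩
  have key : ∀ k, i ≤ k → k + 2 ≤ j → S (k + 1) = S k ∨ S (k + 1) = -S k := by
    intro k hk hk2
    obtain ⟨a, b, hab⟩ := hcomb k hk (by omega) (k + 2) (by omega) (by omega)
    obtain ⟨c, d, hcd⟩ := hcomb (k + 1) (by omega) (by omega) k hk (by omega)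
    have hsub : ((a : ℝ) * c + b) • toR (P (k + 1)) +
        ((a : ℝ) * d - 1) • toR (P (k + 2)) = 0 := by
      have h2 : toR (P (k + 2)) = (a : ℝ) • ((c : ℝ) • toR (P (k + 1)) +
          (d : ℝ) • toR (P (k + 2))) + (b : ℝ) • toR (P (k + 1)) := by
        rw [← hcd]; exact hab
      have h3 : ((a : ℝ) * c + b) • toR (P (k + 1)) + ((a : ℝ) * d - 1) • toR (P (k + 2)) =
          ((a : ℝ) • ((c : ℝ) • toR (P (k + 1)) + (d : ℝ) • toR (P (k + 2))) +
            (b : ℝ) • toR (P (k + 1))) - toR (P (k + 2)) := by module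
      rw [h3, ← h2, sub_self]
    obtain ⟨h1, h2⟩ := LinearIndependent.pair_iff.mp (indep_pair hξ hP (k + 1)) _ _ hsub
    have had : a * d = 1 := by
      have : ((a * d : ℤ) : ℝ) = 1 := by push_cast; linarith [sub_eq_zero.mp h2]
      exact_mod_cast this
    have haunit : a = 1 ∨ a = -1 := Int.isUnit_iff.mp (IsUnit.of_mul_eq_one (a := a) d had)
    have hev : Polynomial.aeval ξ (P (k + 2)) =
        (a : ℝ) * Polynomial.aeval ξ (P k) + (b : ℝ) * Polynomial.aeval ξ (P (k + 1)) := by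
      rw [aeval_eq_eval_toR, hab, aeval_eq_eval_toR, aeval_eq_eval_toR]; simp
    have hSstep : S (k + 1) = (-(a : ℝ)) • S k := by
      simp only [hSdef]
      rw [show k + 1 + 1 = k + 2 from rfl, hab, hev]
      module
    rcases haunit with ha1 | ha1
    · right; rw [hSstep, ha1]; simp
    · left; rw [hSstep, ha1]; simp
  have main : ∀ m : ℕ, i + m + 1 ≤ j → (S (i + m) = S i ∨ S (i + m) = -S i) := by
    intro m
    induction m with
    | zero => intro _; left; rfl
    | succ m ih =>
      intro hm
      have h1 := ih (by omega)
      have h2 := key (i + m) (by omega) (by omega)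
      rw [show i + (m + 1) = (i + m) + 1 from rfl]
      rcases h1 with h1 | h1 <;> rcases h2 with h2 | h2
      · left; rw [h2, h1]
      · right; rw [h2, h1]
      · right; rw [h2, h1]
      · left; rw [h2, h1, neg_neg]
  have hm := main (j - 1 - i) (by omega)
  rw [show i + (j - 1 - i) = j - 1 by omega] at hm
  exact hm
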